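/- Let H : ℍ₂ → ℂ², H(z₁,z₂) = (-1/z₁, z₂/(2z₁²)). Then for all z = (z₁, z₂) ∈ ℍ₂, writing z₁ = x + iy and u = u_{ℍ₂}(z) = -y + |z₂|², the squared Bergman norm satisfies u⁴·‖H(z)‖²_{ℍ₂,z} = (y - |z₂|²)²·(x² + y² + 3|z₂|²y)/(x²+y²)² ≤ 4; hence ‖H(z)‖_{ℍ₂,z} ≤ 2/u_{ℍ₂}(z)². -/

import Mathlib

open Complex

/-- The squared Bergman norm `wᵀ(g_{j,k})w̄` at `z ∈ ℍ₂`, with `u = -Im z₁ + |z₂|²`,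
`g_{1,1} = 1/u²`, `g_{1,2} = 2iz₂/u²`, `g_{2,1} = -2iz̄₂/u²`, `g_{2,2} = 4 Im z₁/u²`. -/
noncomputable def bergNormSq2 (z w : ℂ × ℂ) : ℂ :=
  let u : ℂ := ((-z.1.im + ‖z.2‖ ^ 2 : ℝ) : ℂ)
  (1 / u ^ 2) * (w.1 * (starRingEnd ℂ) w.1)
    + (2 * I * z.2 / u ^ 2) * (w.1 * (starRingEnd ℂ) w.2)
    + (-(2 * I * (starRingEnd ℂ) z.2) / u ^ 2) * (w.2 * (starRingEnd ℂ) w.1)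
    + ((4 * z.1.im : ℝ) / u ^ 2) * (w.2 * (starRingEnd ℂ) w.2)

/-- For `H(z₁,z₂) = (-1/z₁, z₂/(2z₁²))` on `ℍ₂`, writing `z₁ = x + iy` and
`u = -y + |z₂|²`, one has
`u⁴·‖H(z)‖²_{ℍ₂,z} = (y - |z₂|²)²(x² + y² + 3|z₂|²y)/(x²+y²)² ≤ 4`, hence
`‖H(z)‖_{ℍ₂,z} ≤ 2/u²`. -/
theorem bergman_bound_example (z : ℂ × ℂ) (hz : ‖z.2‖ ^ 2 < z.1.im) :
    (((-z.1.im + ‖z.2‖ ^ 2 : ℝ) : ℂ) ^ 4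
        * bergNormSq2 z (-1 / z.1, z.2 / (2 * z.1 ^ 2))
      = (((z.1.im - ‖z.2‖ ^ 2) ^ 2
          * (z.1.re ^ 2 + z.1.im ^ 2 + 3 * ‖z.2‖ ^ 2 * z.1.im)
          / (z.1.re ^ 2 + z.1.im ^ 2) ^ 2 : ℝ) : ℂ)) ∧
    (z.1.im - ‖z.2‖ ^ 2) ^ 2
        * (z.1.re ^ 2 + z.1.im ^ 2 + 3 * ‖z.2‖ ^ 2 * z.1.im)
        / (z.1.re ^ 2 + z.1.im ^ 2) ^ 2 ≤ 4 ∧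
    Real.sqrt (bergNormSq2 z (-1 / z.1, z.2 / (2 * z.1 ^ 2))).re
      ≤ 2 / (-z.1.im + ‖z.2‖ ^ 2) ^ 2 := by
  have hr : (0:ℝ) ≤ ‖z.2‖ ^ 2 := by positivity
  have hy : 0 < z.1.im := lt_of_le_of_lt hr hz
  set x : ℝ := z.1.re with hx
  set y : ℝ := z.1.im with hyd
  set r : ℝ := ‖z.2‖ ^ 2 with hrd
  have hb : z.2 * (starRingEnd ℂ) z.2 = (r : ℂ) := by
    rw [Complex.mul_conj]; rw [hrd, Complex.sq_norm]
  have e1 : z.1 = (x:ℂ) + y * I := (Complex.re_add_im z.1).symm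
  have e2 : (starRingEnd ℂ) z.1 = (x:ℂ) - y * I := by
    apply Complex.ext <;> simp [hx, hyd]
  have hz1 : z.1 ≠ 0 := by
    intro h; rw [hyd, h] at hy; simp at hy
  have h1 : ((x:ℂ) + y * I) ≠ 0 := e1 ▸ hz1
  have h2 : ((x:ℂ) - y * I) ≠ 0 := by rw [← e2]; simpa using hz1
  have hu' : (-(y:ℂ) + r) ≠ 0 := by
    intro h
    have : ((-y + r : ℝ) : ℂ) = 0 := by push_cast; exact h
    rw [Complex.ofReal_eq_zero] at this; linarith
  have hxy : (0:ℝ) < x ^ 2 + y ^ 2 := by nlinarith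
  have hN : ((x:ℂ) ^ 2 + (y:ℂ) ^ 2) ≠ 0 := by
    intro h
    have : ((x ^ 2 + y ^ 2 : ℝ) : ℂ) = 0 := by push_cast; exact h
    rw [Complex.ofReal_eq_zero] at this
    nlinarith
  have key : bergNormSq2 z (-1 / z.1, z.2 / (2 * z.1 ^ 2))
      = (1 / ((-(y:ℂ) + r) ^ 2)) *
          (1 / (z.1 * (starRingEnd ℂ) z.1)
            - I * (z.2 * (starRingEnd ℂ) z.2) / (z.1 * (starRingEnd ℂ) z.1 ^ 2)
            + I * (z.2 * (starRingEnd ℂ) z.2) / (z.1 ^ 2 * (starRingEnd ℂ) z.1)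
            + (y:ℂ) * (z.2 * (starRingEnd ℂ) z.2) / (z.1 ^ 2 * (starRingEnd ℂ) z.1 ^ 2)) := by
    unfold bergNormSq2
    simp only [map_div₀, map_neg, map_one, map_mul, map_pow, map_ofNat, Complex.conj_I,
      Complex.conj_conj, Complex.conj_ofReal, ← hx, ← hyd, ← hrd]
    push_cast
    ring
  have main : (((-y + r : ℝ) : ℂ) ^ 4
        * bergNormSq2 z (-1 / z.1, z.2 / (2 * z.1 ^ 2))
      = (((y - r) ^ 2 * (x ^ 2 + y ^ 2 + 3 * r * y)
          / (x ^ 2 + y ^ 2) ^ 2 : ℝ) : ℂ)) := by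
    rw [key, hb, e2, e1]
    push_cast
    field_simp [h1, h2, hu', hN]
    linear_combination (((y:ℂ) - r) ^ 2 * ((((x:ℂ) ^ 2 + (y:ℂ) ^ 2) + 3 * y * r) * (y:ℂ) ^ 2 * (2 * ((x:ℂ) ^ 2 + (y:ℂ) ^ 2) - (y:ℂ) ^ 2 * (Complex.I ^ 2 + 1)) - ((y:ℂ) ^ 2 + 2 * r * y) * ((x:ℂ) ^ 2 + (y:ℂ) ^ 2) ^ 2)) * Complex.I_sq
  have hE : (0:ℝ) ≤ x ^ 2 + y ^ 2 + 3 * r * y := by nlinarith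
  have hA2 : (y - r) ^ 2 * (x ^ 2 + y ^ 2 + 3 * r * y) / (x ^ 2 + y ^ 2) ^ 2 ≤ 4 := by
    rw [div_le_iff₀ (by positivity)]
    have hh1 : (y - r) ^ 2 ≤ y ^ 2 := by nlinarith
    have hh2 : x ^ 2 + y ^ 2 + 3 * r * y ≤ 4 * (x ^ 2 + y ^ 2) := by nlinarith
    have hh3 : (y - r) ^ 2 * (x ^ 2 + y ^ 2 + 3 * r * y) ≤ y ^ 2 * (4 * (x ^ 2 + y ^ 2)) :=
      mul_le_mul hh1 hh2 hE (sq_nonneg y)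
    nlinarith [sq_nonneg x]
  refine ⟨by exact_mod_cast main, by exact_mod_cast hA2, ?_⟩
  -- part 3
  set K : ℝ := (y - r) ^ 2 * (x ^ 2 + y ^ 2 + 3 * r * y) / (x ^ 2 + y ^ 2) ^ 2 with hK
  have hu0 : (-y + r) < 0 := by linarith only [hz]
  have hu4 : (0:ℝ) < (-y + r) ^ 4 := by nlinarith [mul_pos_of_neg_of_neg hu0 hu0]
  have hS : bergNormSq2 z (-1 / z.1, z.2 / (2 * z.1 ^ 2)) = ((K / (-y + r) ^ 4 : ℝ) : ℂ) := by
    have h4 : (((-y + r : ℝ) : ℂ)) ^ 4 ≠ 0 := by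
      apply pow_ne_zero
      simp only [ne_eq, Complex.ofReal_eq_zero]
      linarith
    rw [eq_comm, Complex.ofReal_div, Complex.ofReal_pow, div_eq_iff h4]
    linear_combination -main
  rw [hS, Complex.ofReal_re]
  have hKnn : 0 ≤ K := by
    rw [hK]
    positivity
  calc Real.sqrt (K / (-y + r) ^ 4)
      ≤ Real.sqrt (4 / (-y + r) ^ 4) :=
        Real.sqrt_le_sqrt ((div_le_div_iff_of_pos_right hu4).mpr hA2)
    _ = 2 / (-y + r) ^ 2 := by
        rw [show (4:ℝ) / (-y + r) ^ 4 = (2 / (-y + r) ^ 2) ^ 2 by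
            rw [div_pow, ← pow_mul]; norm_num,
          Real.sqrt_sq (by positivity)]
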